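/- Let γ > 0 and let f : B(0,a) → [0,∞) be smooth with f > 0 away from 0. Suppose for integers 0 ≤ k ≤ M the bounds |∇^k f(x)| ≤ Γ_k f(x)^{1−kε} hold on B(0,a) for some ε with 0 < ε < γ/M. Then g = f^γ (extended by g(0)=0) satisfies |∇^M g(x)| ≤ C f(x)^{γ − Mε} on B(0,a) \ {0}; in particular ∇^M g extends continuously to 0 with value 0. -/

import Mathlib

open Metric Filter Topology

/-- Faà di Bruno power bound: if `f ≥ 0` is smooth on `B(0,a)`, positive away from `0`
with `f(0) = 0` (so that `g = f^γ` is extended by `g(0) = 0`), and the derivative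
bounds `|∇^k f(x)| ≤ Γ_k f(x)^{1−kε}` hold for `0 ≤ k ≤ M` with `0 < ε < γ/M`, then
`|∇^M (f^γ)(x)| ≤ C f(x)^{γ−Mε}` on the punctured ball; in particular `∇^M (f^γ)`
extends continuously to `0` with value `0`. -/
theorem power_deriv_bound_faa_di_bruno (n M : ℕ) (a γ ε : ℝ) (ha : 0 < a)
    (hγ : 0 < γ) (hε0 : 0 < ε) (hεγ : ε < γ / (M : ℝ))
    (f : EuclideanSpace ℝ (Fin n) → ℝ)
    (hsm : ContDiffOn ℝ (⊤ : ℕ∞) f (ball 0 a))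
    (hf0 : ∀ x ∈ ball (0 : EuclideanSpace ℝ (Fin n)) a, 0 ≤ f x)
    (hpos : ∀ x ∈ ball (0 : EuclideanSpace ℝ (Fin n)) a, x ≠ 0 → 0 < f x)
    (h0 : f 0 = 0)
    (Γ : ℕ → ℝ)
    (hder : ∀ k : ℕ, k ≤ M → ∀ x ∈ ball (0 : EuclideanSpace ℝ (Fin n)) a,
      ‖iteratedFDerivWithin ℝ k f (ball 0 a) x‖ ≤ Γ k * f x ^ (1 - (k : ℝ) * ε)) :
    ∃ C : ℝ,
      (∀ x ∈ ball (0 : EuclideanSpace ℝ (Fin n)) a \ {0},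
        ‖iteratedFDerivWithin ℝ M (fun y => f y ^ γ) (ball 0 a \ {0}) x‖ ≤
          C * f x ^ (γ - (M : ℝ) * ε)) ∧
      Tendsto (fun x => iteratedFDerivWithin ℝ M (fun y => f y ^ γ) (ball 0 a \ {0}) x)
        (𝓝[ball (0 : EuclideanSpace ℝ (Fin n)) a \ {0}] 0) (𝓝 0) := by
  classical
  set B : Set (EuclideanSpace ℝ (Fin n)) := ball 0 a with hB
  set S : Set (EuclideanSpace ℝ (Fin n)) := B \ {0} with hSdef
  by_cases hne : S.Nonempty
  swap
  · have hS : S = (∅ : Set (EuclideanSpace ℝ (Fin n))) := Set.not_nonempty_iff_eq_empty.1 hne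
    refine ⟨0, fun x hx => absurd (hS ▸ hx) (Set.notMem_empty x), ?_⟩
    rw [hS, nhdsWithin_empty]
    exact tendsto_bot
  -- basic facts
  have hSopen : IsOpen S := isOpen_ball.sdiff isClosed_singleton
  have hSsub : S ⊆ B := Set.diff_subset
  have hSu : UniqueDiffOn ℝ S := hSopen.uniqueDiffOn
  have hfS : ContDiffOn ℝ (⊤ : ℕ∞) f S := hsm.mono hSsub
  have hfpos : ∀ x ∈ S, 0 < f x := fun x hx => hpos x hx.1 (by simpa using hx.2)
  -- transfer the derivative bounds to `S`
  have hders : ∀ k : ℕ, k ≤ M → ∀ x ∈ S,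
      ‖iteratedFDerivWithin ℝ k f S x‖ ≤ Γ k * f x ^ (1 - (k : ℝ) * ε) := by
    intro k hk x hx
    have h1 := iteratedFDerivWithin_of_isOpen (f := f) (𝕜 := ℝ) k hSopen hx
    have h2 := iteratedFDerivWithin_of_isOpen (f := f) (𝕜 := ℝ) k isOpen_ball (hSsub hx)
    rw [h1, ← h2]
    exact hder k hk x (hSsub hx)
  -- the constants Γ are nonnegative
  have hΓ : ∀ k : ℕ, k ≤ M → 0 ≤ Γ k := by
    intro k hk
    obtain ⟨x0, hx0⟩ := hne
    have h1 := hders k hk x0 hx0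
    have h2 : (0:ℝ) < f x0 ^ (1 - (k : ℝ) * ε) := Real.rpow_pos_of_pos (hfpos x0 hx0) _
    nlinarith [norm_nonneg (iteratedFDerivWithin ℝ k f S x0)]
  -- key inductive bound
  have key : ∀ k : ℕ, k ≤ M → ∀ δ : ℝ, ∃ C : ℝ, 0 ≤ C ∧ ∀ x ∈ S,
      ‖iteratedFDerivWithin ℝ k (fun y => f y ^ δ) S x‖ ≤ C * f x ^ (δ - (k : ℝ) * ε) := by
    intro k
    induction k using Nat.strong_induction_on with
    | _ k IH =>
      intro hkM δ
      match k with
      | 0 =>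
        refine ⟨1, zero_le_one, fun x hx => ?_⟩
        rw [norm_iteratedFDerivWithin_zero]
        simp only [Nat.cast_zero, zero_mul, sub_zero, one_mul]
        rw [Real.norm_eq_abs, abs_of_nonneg (Real.rpow_nonneg (hfpos x hx).le _)]
      | (j+1) =>
        -- smoothness facts
        have hjM : j + 1 ≤ M := hkM
        have hgS : ContDiffOn ℝ (⊤ : ℕ∞) (fun y => f y ^ δ) S :=
          hfS.rpow_const_of_ne (fun x hx => (hfpos x hx).ne')
        have hcS : ContDiffOn ℝ (⊤ : ℕ∞) (fun y => δ * f y ^ (δ - 1)) S :=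
          contDiffOn_const.mul (hfS.rpow_const_of_ne (fun x hx => (hfpos x hx).ne'))
        have hFS : ContDiffOn ℝ (⊤ : ℕ∞) (fderivWithin ℝ f S) S := by
          apply hfS.fderivWithin hSu
          exact_mod_cast le_refl _
        -- the derivative of f^δ on S
        have hEq : Set.EqOn (fderivWithin ℝ (fun y => f y ^ δ) S)
            (fun y => (δ * f y ^ (δ - 1)) • fderivWithin ℝ f S y) S := by
          intro x hx
          have hfd : HasFDerivWithinAt f (fderivWithin ℝ f S x) S x :=
            ((hfS.differentiableOn (by simp)) x hx).hasFDerivWithinAt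
          have hd : HasDerivAt (fun t : ℝ => t ^ δ) (δ * f x ^ (δ - 1)) (f x) :=
            Real.hasDerivAt_rpow_const (Or.inl (hfpos x hx).ne')
          have hcomp := hd.comp_hasFDerivWithinAt x hfd
          exact hcomp.fderivWithin (hSu x hx)
        -- constants from the inductive hypothesis for f^(δ-1)
        set D : ℕ → ℝ := fun i =>
          if h : i < j + 1 then
            Classical.choose (IH i h (le_trans (Nat.le_of_lt_succ h) (Nat.le_of_succ_le hjM))
              (δ - 1))
          else 0 with hD
        have hDspec : ∀ i (h : i < j + 1), 0 ≤ D i ∧ ∀ x ∈ S,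
            ‖iteratedFDerivWithin ℝ i (fun y => f y ^ (δ - 1)) S x‖ ≤
              D i * f x ^ ((δ - 1) - (i : ℝ) * ε) := by
          intro i h
          have := Classical.choose_spec
            (IH i h (le_trans (Nat.le_of_lt_succ h) (Nat.le_of_succ_le hjM)) (δ - 1))
          simpa [hD, h, Nat.le_of_lt_succ h] using this
        refine ⟨∑ i ∈ Finset.range (j + 1),
          (j.choose i : ℝ) * (|δ| * D i) * Γ (j - i + 1), ?_, ?_⟩
        · apply Finset.sum_nonneg
          intro i hi
          have hi' : i < j + 1 := Finset.mem_range.1 hi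
          have h1 : 0 ≤ D i := (hDspec i hi').1
          have h2 : 0 ≤ Γ (j - i + 1) := hΓ _ (by omega)
          positivity
        · intro x hx
          have hfx : 0 < f x := hfpos x hx
          -- rewrite the (j+1)-st derivative as the j-th derivative of the fderiv
          rw [← norm_iteratedFDerivWithin_fderivWithin hSu hx,
            iteratedFDerivWithin_congr hEq hx j]
          -- Leibniz bound for the scalar product
          have hle := norm_iteratedFDerivWithin_smul_le (𝕜 := ℝ)
            (f := fun y => δ * f y ^ (δ - 1)) (g := fderivWithin ℝ f S)
            hcS hFS hSu hx (n := j) (by exact_mod_cast le_top)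
          refine hle.trans ?_
          rw [Finset.sum_mul]
          apply Finset.sum_le_sum
          intro i hi
          have hi' : i < j + 1 := Finset.mem_range.1 hi
          have hij : i ≤ j := Nat.le_of_lt_succ hi'
          -- bound on the i-th derivative of δ * f^(δ-1)
          have hcbound : ‖iteratedFDerivWithin ℝ i (fun y => δ * f y ^ (δ - 1)) S x‖ ≤
              |δ| * D i * f x ^ ((δ - 1) - (i : ℝ) * ε) := by
            have hsm' : ContDiffOn ℝ (i : WithTop ℕ∞) (fun y => f y ^ (δ - 1)) S :=
              (hfS.rpow_const_of_ne (fun x hx => (hfpos x hx).ne')).of_le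
                (by exact_mod_cast le_top)
            have heq : (fun y => δ * f y ^ (δ - 1)) = δ • (fun y => f y ^ (δ - 1)) := by
              funext y; simp [smul_eq_mul]
            rw [heq, iteratedFDerivWithin_const_smul_apply (hsm' x hx) hSu hx, norm_smul,
              Real.norm_eq_abs, mul_assoc]
            have := (hDspec i hi').2 x hx
            have hD0 : 0 ≤ D i := (hDspec i hi').1
            nlinarith [abs_nonneg δ, norm_nonneg
              (iteratedFDerivWithin ℝ i (fun y => f y ^ (δ - 1)) S x)]
          -- bound on the (j-i)-th derivative of fderivWithin f S
          have hFbound : ‖iteratedFDerivWithin ℝ (j - i) (fderivWithin ℝ f S) S x‖ ≤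
              Γ (j - i + 1) * f x ^ (1 - ((j - i + 1 : ℕ) : ℝ) * ε) := by
            rw [norm_iteratedFDerivWithin_fderivWithin hSu hx]
            exact hders (j - i + 1) (by omega) x hx
          -- combine
          have hchoose : (0:ℝ) ≤ (j.choose i : ℝ) := Nat.cast_nonneg _
          have hΓ0 : 0 ≤ Γ (j - i + 1) := hΓ _ (by omega)
          have hD0 : 0 ≤ D i := (hDspec i hi').1
          have hprod := mul_le_mul hcbound hFbound (norm_nonneg _)
            (by positivity)
          calc (j.choose i : ℝ) * ‖iteratedFDerivWithin ℝ i (fun y => δ * f y ^ (δ - 1)) S x‖ *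
              ‖iteratedFDerivWithin ℝ (j - i) (fderivWithin ℝ f S) S x‖
              ≤ (j.choose i : ℝ) * ((|δ| * D i * f x ^ ((δ - 1) - (i : ℝ) * ε)) *
                (Γ (j - i + 1) * f x ^ (1 - ((j - i + 1 : ℕ) : ℝ) * ε))) := by
                rw [mul_assoc]
                exact mul_le_mul_of_nonneg_left hprod hchoose
            _ = (j.choose i : ℝ) * (|δ| * D i) * Γ (j - i + 1) *
                (f x ^ ((δ - 1) - (i : ℝ) * ε) * f x ^ (1 - ((j - i + 1 : ℕ) : ℝ) * ε)) := by
                ring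
            _ = (j.choose i : ℝ) * (|δ| * D i) * Γ (j - i + 1) *
                f x ^ (δ - ((j + 1 : ℕ) : ℝ) * ε) := by
                rw [← Real.rpow_add hfx]
                congr 1
                have : ((j - i + 1 : ℕ) : ℝ) = ((j + 1 : ℕ) : ℝ) - (i : ℝ) := by
                  have : j - i + 1 + i = j + 1 := by omega
                  push_cast [← this]
                  ring
                rw [this]
                push_cast
                ring
  -- instantiate at k = M, δ = γ
  obtain ⟨C, hC0, hCb⟩ := key M le_rfl γ
  refine ⟨C, hCb, ?_⟩
  -- positivity of the exponent
  have hM : 0 < (M : ℝ) := by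
    rcases Nat.eq_zero_or_pos M with h | h
    · exfalso
      rw [h] at hεγ
      simp at hεγ
      linarith
    · exact_mod_cast h
  have hexp : 0 < γ - (M : ℝ) * ε := by
    have := (lt_div_iff₀ hM).1 hεγ
    linarith
  -- f tends to 0
  have hf_tendsto : Tendsto f (𝓝[S] 0) (𝓝 0) := by
    have h0B : (0 : EuclideanSpace ℝ (Fin n)) ∈ B := mem_ball_self ha
    have := (hsm.continuousOn 0 h0B).tendsto
    rw [h0] at this
    exact this.mono_left (nhdsWithin_mono _ hSsub)
  have hpow_tendsto : Tendsto (fun x => C * f x ^ (γ - (M : ℝ) * ε)) (𝓝[S] 0) (𝓝 0) := by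
    have hcont : ContinuousAt (fun t : ℝ => t ^ (γ - (M : ℝ) * ε)) 0 :=
      Real.continuousAt_rpow_const 0 _ (Or.inr hexp.le)
    have h1 : Tendsto (fun x => f x ^ (γ - (M : ℝ) * ε)) (𝓝[S] 0) (𝓝 0) := by
      have := hcont.tendsto.comp hf_tendsto
      rwa [Real.zero_rpow hexp.ne'] at this
    simpa using h1.const_mul C
  apply squeeze_zero_norm' _ hpow_tendsto
  filter_upwards [self_mem_nhdsWithin] with x hx
  exact hCb x hx
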